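/- arXiv:2603.03987 — 2 statements merged into one kernel-verified Lean document; each statement's English description precedes it below -/
import Mathlib

section
/- Let τ ∈ (0,1), δ > 0, η ∈ ℝ, and set ξ = (1−2τ)/(τ(1−τ)) and σ² = 2/(τ(1−τ)). Let z and w be independent real random variables on a probability space, with z standard normal and w exponentially distributed with rate δ². Then the random variable y† = η + ξ·w + σ·z·√(w/δ²) has the asymmetric Laplace distribution ALD(η, δ², τ); that is, the law of y† is absolutely continuous with respect to Lebesgue measure with density y ↦ τ(1−τ)δ² · exp(−δ² ρ_τ(y − η)). (Location-scale mixture representation of the ALD.) -/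
open MeasureTheory ProbabilityTheory Real

open Set

open scoped ENNReal NNReal

/-- The check (loss) function of quantile regression at level `τ`. -/
noncomputable def checkFun (τ v : ℝ) : ℝ := if 0 ≤ v then τ * |v| else (1 - τ) * |v|


-- Glasser: ∫_{t>0} e^{-(ct - d/t)^2} dt = √π/(2c)
lemma glasser {c d : ℝ} (hc : 0 < c) (hd : 0 ≤ d) :
    IntegrableOn (fun t => Real.exp (-(c*t - d/t)^2)) (Ioi 0) ∧
    ∫ t in Ioi (0:ℝ), Real.exp (-(c*t - d/t)^2) = Real.sqrt π / (2*c) := by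
  rcases eq_or_lt_of_le hd with h0 | hd
  · -- d = 0 case
    have hcongr : ∀ t ∈ Ioi (0:ℝ), Real.exp (-(c^2) * t^2) = Real.exp (-(c*t - d/t)^2) := by
      intro t ht
      rw [← h0]
      ring_nf
    constructor
    · exact ((integrable_exp_neg_mul_sq (by positivity : (0:ℝ) < c^2)).integrableOn).congr_fun
        hcongr measurableSet_Ioi
    rw [← setIntegral_congr_fun measurableSet_Ioi hcongr, integral_gaussian_Ioi]
    rw [show π / c^2 = (Real.sqrt π / c)^2 by rw [div_pow, sq_sqrt pi_pos.le],
      Real.sqrt_sq (by positivity)]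
    ring
  -- main case d > 0
  set φ : ℝ → ℝ := fun t => c*t - d/t with hφ
  have hderiv : ∀ t ∈ Ioi (0:ℝ), HasDerivWithinAt φ (c + d/t^2) (Ioi 0) t := by
    intro t ht
    have ht0 : t ≠ 0 := ne_of_gt ht
    have : HasDerivAt φ (c + d/t^2) t := by
      have h1 : HasDerivAt (fun t : ℝ => c * t) c t := by
        simpa using (hasDerivAt_id t).const_mul c
      have h2 : HasDerivAt (fun t : ℝ => d / t) (-(d / t^2)) t := by
        simpa [div_eq_mul_inv, sq] using (hasDerivAt_inv ht0).const_mul d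
      exact (h1.sub h2).congr_deriv (by ring)
    exact this.hasDerivWithinAt
  have hmono : StrictMonoOn φ (Ioi 0) := by
    intro x hx y hy hxy
    have hx0 : (0:ℝ) < x := hx
    have hy0 : (0:ℝ) < y := hy
    have : d / y < d / x := by
      apply div_lt_div_of_pos_left hd hx0 hxy
    have : -(d/x) < -(d/y) := by linarith
    have : c * x < c * y := by exact (mul_lt_mul_iff_right₀ hc).2 hxy
    simp only [hφ]
    linarith [div_lt_div_of_pos_left hd hx0 hxy]
  have hinj : InjOn φ (Ioi 0) := hmono.injOn
  have himg : φ '' (Ioi 0) = univ := by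
    apply eq_univ_of_forall
    intro u
    have hs : Real.sqrt (u^2 + 4*c*d) ^ 2 = u^2 + 4*c*d := sq_sqrt (by positivity)
    have hsgt : -u < Real.sqrt (u^2 + 4*c*d) := by
      rcases le_or_gt u 0 with h | h
      · have : |u| < Real.sqrt (u^2+4*c*d) := by
          rw [← Real.sqrt_sq_eq_abs]
          apply Real.sqrt_lt_sqrt (sq_nonneg u)
          nlinarith
        calc -u ≤ |u| := neg_le_abs u
        _ < _ := this
      · linarith [Real.sqrt_nonneg (u^2+4*c*d)]
    have ht0pos : 0 < (u + Real.sqrt (u^2 + 4*c*d)) / (2*c) := by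
      apply div_pos _ (by linarith)
      linarith
    refine ⟨(u + Real.sqrt (u^2 + 4*c*d)) / (2*c), ht0pos, ?_⟩
    show c * ((u + Real.sqrt (u^2 + 4*c*d)) / (2*c)) - d / ((u + Real.sqrt (u^2 + 4*c*d)) / (2*c)) = u
    have hne : u + Real.sqrt (u^2 + 4*c*d) ≠ 0 := by nlinarith
    have h2c : (2*c) ≠ 0 := by positivity
    generalize Real.sqrt (u^2 + 4*c*d) = S at hs hne ⊢
    field_simp
    nlinarith [hs]
  -- substitution u = φ t
  have key := integral_image_eq_integral_abs_deriv_smul measurableSet_Ioi hderiv hinj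
    (fun u => Real.exp (-u^2))
  rw [himg] at key
  have hgauss : ∫ u : ℝ, Real.exp (-u^2) = Real.sqrt π := by
    have := integral_gaussian (1:ℝ)
    simpa using this
  have keyInt := (integrableOn_image_iff_integrableOn_abs_deriv_smul measurableSet_Ioi hderiv hinj
    (fun u => Real.exp (-u^2))).1 (by
      rw [himg]
      rw [integrableOn_univ]
      have := integrable_exp_neg_mul_sq (one_pos (α := ℝ))
      simpa using this)
  set J := ∫ t in Ioi (0:ℝ), Real.exp (-(φ t)^2) with hJ
  set B := ∫ t in Ioi (0:ℝ), (d/t^2) * Real.exp (-(φ t)^2) with hB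
  have hmeas1 : AEStronglyMeasurable (fun t : ℝ => c * Real.exp (-(φ t)^2))
      (volume.restrict (Ioi 0)) := by
    apply Measurable.aestronglyMeasurable
    fun_prop
  have hmeas2 : AEStronglyMeasurable (fun t : ℝ => (d/t^2) * Real.exp (-(φ t)^2))
      (volume.restrict (Ioi 0)) := by
    apply Measurable.aestronglyMeasurable
    apply Measurable.mul _ (by fun_prop)
    fun_prop
  have hbound : ∀ t ∈ Ioi (0:ℝ),
      (c + d/t^2) * Real.exp (-(φ t)^2) = |c + d/t^2| • Real.exp (-(φ t)^2) := by
    intro t ht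
    have ht0 : (0:ℝ) < t := ht
    rw [abs_of_pos (by positivity), smul_eq_mul]
  have hInt0 : IntegrableOn (fun t : ℝ => (c + d/t^2) * Real.exp (-(φ t)^2)) (Ioi 0) := by
    exact keyInt.congr_fun (fun t ht => (hbound t ht).symm) measurableSet_Ioi
  have hInt1 : IntegrableOn (fun t : ℝ => c * Real.exp (-(φ t)^2)) (Ioi 0) := by
    refine Integrable.mono hInt0 hmeas1 ?_
    filter_upwards [ae_restrict_mem measurableSet_Ioi] with t ht
    have ht0 : (0:ℝ) < t := ht
    have he : (0:ℝ) < Real.exp (-(φ t)^2) := Real.exp_pos _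
    have hd2 : (0:ℝ) ≤ d/t^2 := by positivity
    simp only [Real.norm_eq_abs]
    rw [abs_of_nonneg (by positivity : (0:ℝ) ≤ c * Real.exp (-(φ t)^2)),
      abs_of_nonneg (by positivity : (0:ℝ) ≤ (c + d/t^2) * Real.exp (-(φ t)^2))]
    nlinarith
  have hInt2 : IntegrableOn (fun t : ℝ => (d/t^2) * Real.exp (-(φ t)^2)) (Ioi 0) := by
    refine Integrable.mono hInt0 hmeas2 ?_
    filter_upwards [ae_restrict_mem measurableSet_Ioi] with t ht
    have ht0 : (0:ℝ) < t := ht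
    have he : (0:ℝ) < Real.exp (-(φ t)^2) := Real.exp_pos _
    have hd2 : (0:ℝ) ≤ d/t^2 := by positivity
    simp only [Real.norm_eq_abs]
    rw [abs_of_nonneg (by positivity : (0:ℝ) ≤ (d/t^2) * Real.exp (-(φ t)^2)),
      abs_of_nonneg (by positivity : (0:ℝ) ≤ (c + d/t^2) * Real.exp (-(φ t)^2))]
    nlinarith
  have hsum : Real.sqrt π = c * J + B := by
    have h0 : Real.sqrt π = ∫ x in Ioi (0:ℝ), (c + d/x^2) * Real.exp (-(φ x)^2) := by
      rw [setIntegral_congr_fun measurableSet_Ioi hbound, ← key, setIntegral_univ, hgauss]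
    have hadd : (∫ x in Ioi (0:ℝ), (c + d/x^2) * Real.exp (-(φ x)^2))
        = (∫ x in Ioi (0:ℝ), c * Real.exp (-(φ x)^2))
          + ∫ x in Ioi (0:ℝ), (d/x^2) * Real.exp (-(φ x)^2) := by
      rw [← integral_add hInt1 hInt2]
      exact integral_congr_ae (Filter.Eventually.of_forall fun t => by ring)
    rw [h0, hadd, integral_const_mul]
  -- second substitution: B = c * J
  have hderiv2 : ∀ s ∈ Ioi (0:ℝ), HasDerivWithinAt (fun s : ℝ => d/(c*s))
      (-(d/(c*s^2))) (Ioi 0) s := by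
    intro s hs
    have hs0 : s ≠ 0 := ne_of_gt hs
    have : HasDerivAt (fun s : ℝ => d/(c*s)) (-(d/(c*s^2))) s := by
      have h2 : HasDerivAt (fun s : ℝ => s⁻¹) (-(s^2)⁻¹) s := by
        simpa [sq] using hasDerivAt_inv hs0
      have := h2.const_mul (d/c)
      have hf : (fun y : ℝ => d/c * y⁻¹) = (fun s : ℝ => d/(c*s)) := by funext x; ring
      rw [hf] at this
      exact this.congr_deriv (by ring)
    exact this.hasDerivWithinAt
  have hinj2 : InjOn (fun s : ℝ => d/(c*s)) (Ioi 0) := by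
    have : StrictAntiOn (fun s : ℝ => d/(c*s)) (Ioi 0) := by
      intro x hx y hy hxy
      have hx0 : (0:ℝ) < x := hx
      exact div_lt_div_of_pos_left hd (by positivity) ((mul_lt_mul_iff_right₀ hc).2 hxy)
    exact this.injOn
  have himg2 : (fun s : ℝ => d/(c*s)) '' (Ioi 0) = Ioi 0 := by
    ext u
    simp only [mem_image, mem_Ioi]
    constructor
    · rintro ⟨s, hs, rfl⟩
      positivity
    · intro hu
      refine ⟨d/(c*u), by positivity, ?_⟩
      field_simp
  have key2 := integral_image_eq_integral_abs_deriv_smul measurableSet_Ioi hderiv2 hinj2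
    (fun t => Real.exp (-(c*t - d/t)^2))
  rw [himg2] at key2
  have hcongr2 : ∀ s ∈ Ioi (0:ℝ),
      |(-(d/(c*s^2)))| • ((fun t => Real.exp (-(c*t - d/t)^2)) ((fun s : ℝ => d/(c*s)) s))
        = (1/c) * ((d/s^2) * Real.exp (-(c*s - d/s)^2)) := by
    intro s hs
    have hs0 : (0:ℝ) < s := hs
    have h1 : c*(d/(c*s)) - d/(d/(c*s)) = -(c*s - d/s) := by
      field_simp
      ring
    simp only [smul_eq_mul, abs_neg]
    rw [h1, abs_of_pos (by positivity)]
    rw [show (-(c*s - d/s))^2 = (c*s - d/s)^2 by ring]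
    field_simp
    try ring
  have hJB : J = (1/c) * B := by
    have : J = ∫ t in Ioi (0:ℝ), Real.exp (-(c*t - d/t)^2) := rfl
    rw [this, key2, setIntegral_congr_fun measurableSet_Ioi hcongr2,
      integral_const_mul]
  have hB' : B = c * J := by rw [hJB]; field_simp
  rw [hB'] at hsum
  have hfin : J = Real.sqrt π / (2*c) := by
    field_simp at hsum ⊢
    linarith
  refine ⟨?_, hfin⟩
  have := (hInt1.const_mul (1/c))
  refine this.congr ?_
  filter_upwards with t
  simp only [hφ, one_div, inv_mul_cancel_left₀ hc.ne']


lemma bessel_half {a b : ℝ} (ha : 0 < a) (hb : 0 ≤ b) :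
    IntegrableOn (fun w => (Real.sqrt w)⁻¹ * Real.exp (-(a*w + b/w))) (Ioi 0) ∧
    ∫ w in Ioi (0:ℝ), (Real.sqrt w)⁻¹ * Real.exp (-(a*w + b/w))
      = Real.sqrt (π/a) * Real.exp (-2 * Real.sqrt (a*b)) := by
  set c := Real.sqrt a with hc
  set d := Real.sqrt b with hd
  have hcpos : 0 < c := Real.sqrt_pos.2 ha
  have hdnn : 0 ≤ d := Real.sqrt_nonneg b
  have hc2 : c^2 = a := sq_sqrt ha.le
  have hd2 : d^2 = b := sq_sqrt hb
  have hcd : c * d = Real.sqrt (a*b) := (Real.sqrt_mul ha.le b).symm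
  obtain ⟨hGint, hGval⟩ := glasser hcpos hdnn
  have hderiv : ∀ t ∈ Ioi (0:ℝ), HasDerivWithinAt (fun t : ℝ => t^2) (2*t) (Ioi 0) t := by
    intro t ht
    simpa [mul_comm] using (hasDerivAt_pow 2 t).hasDerivWithinAt
  have hinj : InjOn (fun t : ℝ => t^2) (Ioi 0) := by
    intro x hx y hy h
    have hx0 : (0:ℝ) < x := hx
    have hy0 : (0:ℝ) < y := hy
    have h' : x^2 = y^2 := h
    nlinarith
  have himg : (fun t : ℝ => t^2) '' (Ioi 0) = Ioi 0 := by
    ext u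
    simp only [mem_image, mem_Ioi]
    constructor
    · rintro ⟨t, ht, rfl⟩; positivity
    · intro hu
      exact ⟨Real.sqrt u, Real.sqrt_pos.2 hu, sq_sqrt hu.le⟩
  set g : ℝ → ℝ := fun w => (Real.sqrt w)⁻¹ * Real.exp (-(a*w + b/w)) with hg
  have hcongr : ∀ t ∈ Ioi (0:ℝ),
      |2*t| • g (t^2) = (2 * Real.exp (-2 * Real.sqrt (a*b))) * Real.exp (-(c*t - d/t)^2) := by
    intro t ht
    have ht0 : (0:ℝ) < t := ht
    have hsq : Real.sqrt (t^2) = t := Real.sqrt_sq ht0.le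
    have hexp : a * t^2 + b / t^2 = (c*t - d/t)^2 + 2 * Real.sqrt (a*b) := by
      rw [← hcd, ← hc2, ← hd2]
      field_simp
      ring
    simp only [hg, smul_eq_mul, hsq, abs_of_pos (by positivity : (0:ℝ) < 2*t)]
    rw [hexp, show -((c*t - d/t)^2 + 2 * Real.sqrt (a*b))
      = (-2 * Real.sqrt (a*b)) + -((c*t - d/t)^2) by ring, Real.exp_add]
    field_simp
  have key := integral_image_eq_integral_abs_deriv_smul measurableSet_Ioi hderiv hinj g
  rw [himg] at key
  have keyInt := integrableOn_image_iff_integrableOn_abs_deriv_smul measurableSet_Ioi hderiv hinj g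
  rw [himg] at keyInt
  constructor
  · rw [keyInt]
    exact IntegrableOn.congr_fun (hGint.const_mul (2 * Real.exp (-2 * Real.sqrt (a*b))))
      (fun t ht => (hcongr t ht).symm) measurableSet_Ioi
  rw [key, setIntegral_congr_fun measurableSet_Ioi hcongr, integral_const_mul, hGval]
  rw [Real.sqrt_div pi_pos.le, ← hc]
  field_simp

lemma ald_density_integral {τ δ η ξ σ : ℝ} (hτ1 : 0 < τ) (hτ2 : τ < 1) (hδ : 0 < δ)
    (hξ : ξ = (1 - 2*τ)/(τ*(1-τ))) (hσ : σ = Real.sqrt (2/(τ*(1-τ)))) (y : ℝ) :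
    IntegrableOn (fun w => δ^2 * Real.exp (-(δ^2*w)) *
        ((Real.sqrt (2*π*(σ^2*w/δ^2)))⁻¹
          * Real.exp (-(y-(η+ξ*w))^2 / (2*(σ^2*w/δ^2))))) (Ioi 0) ∧
    (∫ w in Ioi (0:ℝ), δ^2 * Real.exp (-(δ^2*w)) *
        ((Real.sqrt (2*π*(σ^2*w/δ^2)))⁻¹
          * Real.exp (-(y-(η+ξ*w))^2 / (2*(σ^2*w/δ^2)))))
      = τ*(1-τ)*δ^2 * Real.exp (-(δ^2) * checkFun τ (y-η)) := by
  have hτ3 : 0 < 1 - τ := by linarith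
  have hq : 0 < τ*(1-τ) := mul_pos hτ1 hτ3
  have hσ2 : σ^2 = 2/(τ*(1-τ)) := by rw [hσ]; exact sq_sqrt (by positivity)
  have hσpos : 0 < σ := by rw [hσ]; positivity
  set u : ℝ := y - η with hu
  have ha : 0 < δ^2/(4*(τ*(1-τ))) := by positivity
  have hb : 0 ≤ δ^2*u^2*(τ*(1-τ))/4 := by positivity
  obtain ⟨hint, hval⟩ := bessel_half ha hb
  set C0 : ℝ := δ^2 * (Real.sqrt (τ*(1-τ))*δ/(2*Real.sqrt π))
      * Real.exp (δ^2*u*(1-2*τ)/2) with hC0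
  have hKeq : ∀ w ∈ Ioi (0:ℝ),
      C0 * ((Real.sqrt w)⁻¹
          * Real.exp (-(δ^2/(4*(τ*(1-τ)))*w + (δ^2*u^2*(τ*(1-τ))/4)/w)))
      = δ^2 * Real.exp (-(δ^2*w)) *
        ((Real.sqrt (2*π*(σ^2*w/δ^2)))⁻¹
          * Real.exp (-(y-(η+ξ*w))^2 / (2*(σ^2*w/δ^2)))) := by
    intro w hw
    have hw0 : (0:ℝ) < w := hw
    have hpart1 : (Real.sqrt (2*π*(σ^2*w/δ^2)))⁻¹
        = (Real.sqrt (τ*(1-τ))*δ/(2*Real.sqrt π)) * (Real.sqrt w)⁻¹ := by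
      have h1 : 2*π*(σ^2*w/δ^2) = (4*π/((τ*(1-τ))*δ^2)) * w := by
        rw [hσ2]; field_simp; ring
      have h2 : Real.sqrt (4*π/((τ*(1-τ))*δ^2))
          = 2*Real.sqrt π/(Real.sqrt (τ*(1-τ))*δ) := by
        rw [show 4*π/((τ*(1-τ))*δ^2) = (2*Real.sqrt π/(Real.sqrt (τ*(1-τ))*δ))^2 by
          rw [div_pow, mul_pow, mul_pow, sq_sqrt pi_pos.le, sq_sqrt hq.le]; try ring]
        exact Real.sqrt_sq (by positivity)
      rw [h1, Real.sqrt_mul (by positivity), h2, mul_inv, inv_div]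
      try ring
    have hpart2 : Real.exp (-(δ^2*w)) * Real.exp (-(y-(η+ξ*w))^2 / (2*(σ^2*w/δ^2)))
        = Real.exp (δ^2*u*(1-2*τ)/2)
          * Real.exp (-(δ^2/(4*(τ*(1-τ)))*w + (δ^2*u^2*(τ*(1-τ))/4)/w)) := by
      rw [← Real.exp_add, ← Real.exp_add]
      congr 1
      have hy : y - (η+ξ*w) = u - ξ*w := by rw [hu]; ring
      rw [hy, hσ2, hξ]
      have hτ0 : τ ≠ 0 := ne_of_gt hτ1
      have hτ1' : (1:ℝ) - τ ≠ 0 := ne_of_gt hτ3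
      field_simp
      ring
    rw [hpart1, hC0]
    linear_combination (-(δ^2 * (Real.sqrt (τ*(1-τ))*δ/(2*Real.sqrt π)) * (Real.sqrt w)⁻¹)) * hpart2
  constructor
  · exact IntegrableOn.congr_fun (hint.const_mul C0) hKeq measurableSet_Ioi
  rw [← setIntegral_congr_fun measurableSet_Ioi hKeq, integral_const_mul, hval]
  have hab : δ^2/(4*(τ*(1-τ))) * (δ^2*u^2*(τ*(1-τ))/4) = (δ^2*|u|/4)^2 := by
    rw [show (δ^2*|u|/4)^2 = δ^2*δ^2*(|u|^2)/16 by ring, sq_abs]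
    field_simp
    ring
  have hsab : Real.sqrt (δ^2/(4*(τ*(1-τ))) * (δ^2*u^2*(τ*(1-τ))/4)) = δ^2*|u|/4 := by
    rw [hab, Real.sqrt_sq (by positivity)]
  have hpia : Real.sqrt (π/(δ^2/(4*(τ*(1-τ)))))
      = 2*Real.sqrt (τ*(1-τ))*Real.sqrt π/δ := by
    rw [show π/(δ^2/(4*(τ*(1-τ)))) = (2*Real.sqrt (τ*(1-τ))*Real.sqrt π/δ)^2 by
      rw [div_pow, mul_pow, mul_pow, sq_sqrt pi_pos.le, sq_sqrt hq.le]; field_simp; try ring]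
    exact Real.sqrt_sq (by positivity)
  rw [hsab, hpia, hC0]
  have hqq : Real.sqrt (τ*(1-τ)) * Real.sqrt (τ*(1-τ)) = τ*(1-τ) :=
    Real.mul_self_sqrt hq.le
  have hpp : Real.sqrt π * Real.sqrt π = π := Real.mul_self_sqrt pi_pos.le
  have hexps : Real.exp (δ^2*u*(1-2*τ)/2) * Real.exp (-2 * (δ^2*|u|/4))
      = Real.exp (-(δ^2) * checkFun τ u) := by
    rw [← Real.exp_add]
    congr 1
    rcases le_or_gt 0 u with h | h
    · rw [checkFun, if_pos h, abs_of_nonneg h]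
      ring
    · rw [checkFun, if_neg (not_le.2 h), abs_of_neg h]
      ring
  calc δ^2 * (Real.sqrt (τ*(1-τ))*δ/(2*Real.sqrt π)) * Real.exp (δ^2*u*(1-2*τ)/2)
      * (2*Real.sqrt (τ*(1-τ))*Real.sqrt π/δ * Real.exp (-2 * (δ^2*|u|/4)))
      = (Real.sqrt (τ*(1-τ)) * Real.sqrt (τ*(1-τ))) * (Real.sqrt π * Real.sqrt π)
        * (Real.sqrt π * Real.sqrt π)⁻¹ * δ^2
        * (Real.exp (δ^2*u*(1-2*τ)/2) * Real.exp (-2 * (δ^2*|u|/4))) := by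
        field_simp
    _ = τ*(1-τ)*δ^2 * Real.exp (-(δ^2) * checkFun τ u) := by
        rw [hqq, hpp, hexps]
        field_simp

/-- **Location-scale mixture representation of the ALD.**
If `z` is standard normal, `w` is exponential with rate `δ²`, and `z, w` are independent,
then `y† = η + ξ·w + σ·z·√(w/δ²)` (with `ξ = (1−2τ)/(τ(1−τ))` and `σ² = 2/(τ(1−τ))`)
has the asymmetric Laplace distribution `ALD(η, δ², τ)`, i.e. its law has Lebesgue
density `y ↦ τ(1−τ)δ² exp(−δ² ρ_τ(y − η))`. -/
theorem ald_location_scale_mixture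
    {Ω : Type*} [MeasurableSpace Ω] (P : Measure Ω) [IsProbabilityMeasure P]
    (τ δ η ξ σ : ℝ) (hτ : τ ∈ Set.Ioo (0 : ℝ) 1) (hδ : 0 < δ)
    (hξ : ξ = (1 - 2 * τ) / (τ * (1 - τ))) (hσ : σ = Real.sqrt (2 / (τ * (1 - τ))))
    (z w : Ω → ℝ) (hz : Measurable z) (hw : Measurable w)
    (hindep : IndepFun z w P)
    (hzlaw : Measure.map z P = gaussianReal 0 1)
    (hwlaw : Measure.map w P = expMeasure (δ ^ 2)) :
    Measure.map (fun ω => η + ξ * w ω + σ * z ω * Real.sqrt (w ω / δ ^ 2)) P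
      = volume.withDensity
          (fun y => ENNReal.ofReal (τ * (1 - τ) * δ ^ 2
            * Real.exp (-(δ ^ 2) * checkFun τ (y - η)))) := by
  obtain ⟨hτ1, hτ2⟩ := hτ
  have hτ3 : 0 < 1 - τ := by linarith
  have hσpos : 0 < σ := by rw [hσ]; positivity
  have hδ2 : 0 < δ^2 := by positivity
  haveI : IsProbabilityMeasure (expMeasure (δ^2)) := isProbabilityMeasure_expMeasure hδ2
  -- the joint law is a product measure
  have hpair : Measure.map (fun ω => (w ω, z ω)) P
      = (expMeasure (δ^2)).prod (gaussianReal 0 1) := by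
    have h := (indepFun_iff_map_prod_eq_prod_map_map hw.aemeasurable hz.aemeasurable).1 hindep.symm
    rw [hwlaw, hzlaw] at h
    exact h
  set F : ℝ × ℝ → ℝ := fun p => η + ξ * p.1 + σ * p.2 * Real.sqrt (p.1/δ^2) with hF
  have hsqrt1 : Measurable fun p : ℝ × ℝ => Real.sqrt (p.1/δ^2) :=
    Real.continuous_sqrt.measurable.comp (measurable_fst.div_const _)
  have hFmeas : Measurable F :=
    (measurable_const.add (measurable_fst.const_mul ξ)).add
      ((measurable_snd.const_mul σ).mul hsqrt1)
  have hcomp : (fun ω => η + ξ * w ω + σ * z ω * Real.sqrt (w ω / δ ^ 2))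
      = F ∘ (fun ω => (w ω, z ω)) := rfl
  rw [hcomp, ← Measure.map_map hFmeas (hw.prodMk hz), hpair]
  -- kernel
  set K : ℝ → ℝ → ℝ := fun x y => δ^2 * Real.exp (-(δ^2*x)) *
      ((Real.sqrt (2*π*(σ^2*x/δ^2)))⁻¹
        * Real.exp (-(y-(η+ξ*x))^2 / (2*(σ^2*x/δ^2)))) with hK
  have hKnonneg : ∀ x y, 0 ≤ K x y := by
    intro x y
    rw [hK]
    positivity
  have hKmeas : Measurable (fun p : ℝ × ℝ => ENNReal.ofReal (K p.1 p.2)) := by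
    apply ENNReal.measurable_ofReal.comp
    rw [hK]
    have h1 : Measurable fun p : ℝ × ℝ => δ^2 * Real.exp (-(δ^2*p.1)) :=
      (Real.measurable_exp.comp (measurable_fst.const_mul (δ^2)).neg).const_mul (δ^2)
    have hden : Measurable fun p : ℝ × ℝ => 2*(σ^2*p.1/δ^2) :=
      ((measurable_fst.const_mul (σ^2)).div_const (δ^2)).const_mul 2
    have h2 : Measurable fun p : ℝ × ℝ => (Real.sqrt (2*π*(σ^2*p.1/δ^2)))⁻¹ :=
      (Real.continuous_sqrt.measurable.comp
        (((measurable_fst.const_mul (σ^2)).div_const (δ^2)).const_mul (2*π))).inv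
    have h3 : Measurable fun p : ℝ × ℝ =>
        Real.exp (-(p.2-(η+ξ*p.1))^2 / (2*(σ^2*p.1/δ^2))) :=
      Real.measurable_exp.comp
        ((((measurable_snd.sub (measurable_const.add (measurable_fst.const_mul ξ))).pow_const
          2).neg).div hden)
    exact h1.mul (h2.mul h3)
  ext s hs
  have hs' : MeasurableSet (F ⁻¹' s) := hFmeas hs
  rw [Measure.map_apply hFmeas hs, withDensity_apply _ hs, Measure.prod_apply hs']
  set G : ℝ → ℝ≥0∞ := fun x => (gaussianReal 0 1) (Prod.mk x ⁻¹' (F ⁻¹' s)) with hG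
  have hGmeas : Measurable G := measurable_measure_prodMk_left hs'
  have hεd : expMeasure (δ^2) = volume.withDensity (exponentialPDF (δ^2)) := rfl
  have hexpm : Measurable (exponentialPDF (δ^2)) :=
    (measurable_exponentialPDFReal (δ^2)).ennreal_ofReal
  rw [hεd, lintegral_withDensity_eq_lintegral_mul volume hexpm hGmeas]
  -- restrict to Ioi 0
  have hsplit : (∫⁻ x, exponentialPDF (δ^2) x * G x)
      = ∫⁻ x in Ioi (0:ℝ), exponentialPDF (δ^2) x * G x := by
    rw [← lintegral_add_compl (fun x => exponentialPDF (δ^2) x * G x) measurableSet_Ioi]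
    have h2 : (∫⁻ x in (Ioi (0:ℝ))ᶜ, exponentialPDF (δ^2) x * G x) = 0 := by
      rw [compl_Ioi, ← Measure.restrict_congr_set Iio_ae_eq_Iic]
      rw [setLIntegral_congr_fun measurableSet_Iio
        (fun x (hx : x < 0) => by rw [exponentialPDF_of_neg hx, zero_mul])]
      simp
    rw [h2, add_zero]
  simp only [Pi.mul_apply]
  rw [hsplit]
  -- identify the inner measure with a gaussian integral
  have hinner : ∀ x ∈ Ioi (0:ℝ), exponentialPDF (δ^2) x * G x
      = ∫⁻ y in s, ENNReal.ofReal (K x y) := by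
    intro x hx
    have hx0 : (0:ℝ) < x := hx
    set c : ℝ := σ * Real.sqrt (x/δ^2) with hc
    have hcpos : 0 < c := by
      rw [hc]; positivity
    set b : ℝ := η + ξ*x with hb
    set V : ℝ≥0 := ⟨σ^2*x/δ^2, by positivity⟩ with hV
    have hVpos : 0 < (V:ℝ) := by
      have hco : (V:ℝ) = σ^2*x/δ^2 := rfl
      rw [hco]
      positivity
    have hVne : V ≠ 0 := by
      intro h
      rw [h] at hVpos
      simp at hVpos
    have hmap : (gaussianReal 0 1).map (fun t => c*t + b) = gaussianReal b V := by
      have h1 : (gaussianReal 0 1).map (fun t => c*t + b)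
          = ((gaussianReal 0 1).map (fun t => c*t)).map (fun t => t + b) := by
        rw [Measure.map_map (measurable_id'.add_const b) (measurable_id'.const_mul c)]
        rfl
      rw [h1]
      rw [show (fun t : ℝ => c*t) = (c * ·) from rfl, gaussianReal_map_const_mul c]
      rw [show (fun t : ℝ => t + b) = (· + b) from rfl, gaussianReal_map_add_const b]
      congr 1
      · ring
      · rw [hV]
        ext
        simp only [NNReal.coe_mul, NNReal.coe_mk, NNReal.coe_one, mul_one]
        rw [hc, mul_pow, sq_sqrt (by positivity : (0:ℝ) ≤ x/δ^2)]
        ring_nf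
        rfl
    have hsetEq : Prod.mk x ⁻¹' (F ⁻¹' s) = (fun t => c*t + b) ⁻¹' s := by
      have : (fun t : ℝ => F (x, t)) = fun t => c*t + b := by
        funext t
        rw [hF, hc, hb]
        simp only
        ring
      rw [show Prod.mk x ⁻¹' (F ⁻¹' s) = (fun t : ℝ => F (x, t)) ⁻¹' s from rfl, this]
    have hGx : G x = ∫⁻ y in s, gaussianPDF b V y := by
      simp only [hG]
      rw [hsetEq, ← Measure.map_apply ((measurable_id'.const_mul c).add_const b) hs, hmap,
        gaussianReal_apply b hVne s]
    rw [hGx, exponentialPDF_of_nonneg hx0.le]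
    simp only [gaussianPDF]
    rw [← lintegral_const_mul _ (measurable_gaussianPDFReal b V).ennreal_ofReal]
    apply setLIntegral_congr_fun hs
    intro y _
    dsimp only
    rw [← ENNReal.ofReal_mul (by positivity), hK]
    congr 1
  rw [setLIntegral_congr_fun measurableSet_Ioi hinner]
  -- Tonelli
  have hswap : (∫⁻ x in Ioi (0:ℝ), ∫⁻ y in s, ENNReal.ofReal (K x y))
      = ∫⁻ y in s, ∫⁻ x in Ioi (0:ℝ), ENNReal.ofReal (K x y) :=
    lintegral_lintegral_swap hKmeas.aemeasurable
  rw [hswap]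
  apply setLIntegral_congr_fun hs
  intro y _
  dsimp only
  obtain ⟨hint, hval⟩ := ald_density_integral hτ1 hτ2 hδ hξ hσ y
  rw [← hval, ← ofReal_integral_eq_lintegral_ofReal hint
    (ae_of_all _ (fun x => hKnonneg x y))]
end

section
/- Let τ ∈ (0,1), δ > 0, η ∈ ℝ, ξ = (1−2τ)/(τ(1−τ)) and σ = √(2/(τ(1−τ))). For every y ∈ ℝ, ∫₀^∞ (δ/(σ√(2πw))) · exp(−δ²(y − η − ξw)²/(2σ²w)) · δ² e^{−δ²w} dw = τ(1−τ)δ² · exp(−δ² ρ_τ(y − η)); i.e., the Lebesgue integral over w ∈ (0,∞) of the normal density with mean η + ξw and variance wσ²/δ², evaluated at y, weighted by the exponential density with rate δ², equals the asymmetric Laplace density at y. -/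
open MeasureTheory Real

open Set

/-- Gamma(1/2) integral with rate B. -/
lemma gamma_half_integral {B : ℝ} (hB : 0 < B) :
    ∫ w in Set.Ioi (0:ℝ), (Real.sqrt w)⁻¹ * Real.exp (-(B*w))
      = Real.sqrt (π / B) := by
  have h := integral_rpow_mul_exp_neg_mul_Ioi (a := (1/2 : ℝ)) (by norm_num) hB
  rw [Real.Gamma_one_half_eq] at h
  have : ∀ w ∈ Set.Ioi (0:ℝ), (w : ℝ) ^ ((1:ℝ)/2 - 1) * Real.exp (-(B*w))
      = (Real.sqrt w)⁻¹ * Real.exp (-(B*w)) := by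
    intro w hw
    rw [show (1:ℝ)/2 - 1 = -(1/2) by norm_num, Real.rpow_neg (le_of_lt hw),
      ← Real.sqrt_eq_rpow]
  rw [setIntegral_congr_fun measurableSet_Ioi this] at h
  rw [h, ← Real.sqrt_eq_rpow, ← Real.sqrt_mul (by positivity), one_div, 
    inv_mul_eq_div]

lemma cont_core (A B : ℝ) :
    ContinuousOn (fun w : ℝ => (Real.sqrt w)⁻¹ * Real.exp (-(A/w) - B*w)) (Set.Ioi (0:ℝ)) := by
  have h0 : ∀ x ∈ Set.Ioi (0:ℝ), (x:ℝ) ≠ 0 := fun x hx => ne_of_gt hx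
  have h1 : ContinuousOn (fun w : ℝ => -(A/w) - B*w) (Set.Ioi 0) :=
    ((continuousOn_const.div continuousOn_id h0).neg).sub
      ((continuous_const.mul continuous_id).continuousOn)
  have h2 : ContinuousOn (fun w : ℝ => (Real.sqrt w)⁻¹) (Set.Ioi 0) :=
    (Real.continuous_sqrt.continuousOn).inv₀
      (fun x hx => (Real.sqrt_pos.2 hx).ne')
  exact h2.mul (Real.continuous_exp.comp_continuousOn h1)

lemma integrable_core {A B : ℝ} (hA : 0 ≤ A) (hB : 0 < B) :
    IntegrableOn (fun w => (Real.sqrt w)⁻¹ * Real.exp (-(A/w) - B*w)) (Set.Ioi (0:ℝ)) := by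
  have hmaj : IntegrableOn (fun w : ℝ => w ^ (-(1/2) : ℝ) * Real.exp (-B * w ^ (1:ℝ)))
      (Set.Ioi (0:ℝ)) :=
    integrableOn_rpow_mul_exp_neg_mul_rpow (by norm_num) zero_lt_one hB
  refine Integrable.mono' hmaj
    ((cont_core A B).aestronglyMeasurable measurableSet_Ioi) ?_
  filter_upwards [ae_restrict_mem measurableSet_Ioi] with w hw
  have hw0 : (0:ℝ) < w := hw
  rw [norm_mul, Real.norm_eq_abs, Real.norm_eq_abs, abs_of_nonneg (by positivity),
    abs_of_nonneg (Real.exp_nonneg _), Real.rpow_neg hw0.le, ← Real.sqrt_eq_rpow,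
    Real.rpow_one]
  gcongr
  have : (0:ℝ) ≤ A / w := by positivity
  linarith

lemma reflect {A B : ℝ} (hA : 0 < A) (hB : 0 < B) :
    ∫ w in Set.Ioi (0:ℝ), Real.sqrt (A/B) * ((w * Real.sqrt w)⁻¹ * Real.exp (-(A/w) - B*w))
      = ∫ w in Set.Ioi (0:ℝ), (Real.sqrt w)⁻¹ * Real.exp (-(A/w) - B*w) := by
  set f : ℝ → ℝ := fun w => A/B * w⁻¹ with hf
  have hff : ∀ x ∈ Set.Ioi (0:ℝ), f (f x) = x := by
    intro x hx
    have hx0 : (0:ℝ) < x := hx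
    simp only [hf]
    field_simp
  have himg : f '' Set.Ioi 0 = Set.Ioi 0 := by
    ext x
    constructor
    · rintro ⟨y, hy, rfl⟩
      have : (0:ℝ) < y := hy
      exact mem_Ioi.2 (by positivity)
    · intro hx
      have hx0 : (0:ℝ) < x := hx
      have hfx : (0:ℝ) < f x := by simp only [hf]; positivity
      exact ⟨f x, mem_Ioi.2 hfx, hff x hx⟩
  have hderiv : ∀ x ∈ Set.Ioi (0:ℝ),
      HasDerivWithinAt f (A/B * (-(x^2)⁻¹)) (Set.Ioi 0) x :=
    fun x hx => ((hasDerivAt_inv (ne_of_gt (mem_Ioi.1 hx))).const_mul (A/B)).hasDerivWithinAt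
  have hinj : Set.InjOn f (Set.Ioi 0) := by
    intro a ha b hb h
    have := congrArg f h
    rwa [hff a ha, hff b hb] at this
  have key := integral_image_eq_integral_abs_deriv_smul measurableSet_Ioi hderiv hinj
    (fun w => (Real.sqrt w)⁻¹ * Real.exp (-(A/w) - B*w))
  rw [himg] at key
  rw [key]
  apply setIntegral_congr_fun measurableSet_Ioi
  intro x hx
  have hx0 : (0:ℝ) < x := hx
  have hsx : (0:ℝ) < Real.sqrt x := Real.sqrt_pos.2 hx0
  have hsc : (0:ℝ) < Real.sqrt (A/B) := Real.sqrt_pos.2 (by positivity)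
  have hexp : -(A / f x) - B * f x = -(B*x) - A/x := by
    simp only [hf]
    field_simp [hf]
  have hsqf : Real.sqrt (f x) = Real.sqrt (A/B) * (Real.sqrt x)⁻¹ := by
    rw [hf]
    dsimp only
    rw [Real.sqrt_mul (by positivity), Real.sqrt_inv]
  have habs : |A/B * (-(x^2)⁻¹)| = (A/B) * (x^2)⁻¹ := by
    rw [abs_mul, abs_of_nonneg (by positivity : (0:ℝ) ≤ A/B), abs_neg,
      abs_of_nonneg (by positivity : (0:ℝ) ≤ ((x:ℝ)^2)⁻¹)]
  have h1 : Real.sqrt (A/B) * Real.sqrt (A/B) = A/B := Real.mul_self_sqrt (by positivity)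
  have h2 : Real.sqrt x * Real.sqrt x = x := Real.mul_self_sqrt hx0.le
  have hexp2 : -(A/x) - B*x = -(B*x) - A/x := by ring
  simp only [smul_eq_mul]
  rw [hexp, habs, hsqf, hexp2, ← mul_assoc, ← mul_assoc]
  congr 1
  set D := A/B with hD
  set c := Real.sqrt D with hc
  set s := Real.sqrt x with hs
  field_simp
  linear_combination x * h1 - (A*B⁻¹) * h2

lemma glasser_pos {A B : ℝ} (hA : 0 < A) (hB : 0 < B) :
    ∫ w in Set.Ioi (0:ℝ),
        (Real.sqrt B * (2*Real.sqrt w)⁻¹ + Real.sqrt A * (2*(w*Real.sqrt w))⁻¹)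
          * Real.exp (-(A/w) - B*w)
      = Real.sqrt π * Real.exp (-(2*Real.sqrt (A*B))) := by
  set a := Real.sqrt A with ha'
  set b := Real.sqrt B with hb'
  have ha : 0 < a := Real.sqrt_pos.2 hA
  have hb : 0 < b := Real.sqrt_pos.2 hB
  set ψ : ℝ → ℝ := fun w => b * Real.sqrt w - a * (Real.sqrt w)⁻¹ with hψ
  set ψ' : ℝ → ℝ := fun w => b * (2*Real.sqrt w)⁻¹ + a * (2*(w*Real.sqrt w))⁻¹ with hψ'
  -- derivative
  have hderiv : ∀ x ∈ Set.Ioi (0:ℝ), HasDerivWithinAt ψ (ψ' x) (Set.Ioi 0) x := by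
    intro x hx
    have hx0 : (0:ℝ) < x := hx
    have hsx : (0:ℝ) < Real.sqrt x := Real.sqrt_pos.2 hx0
    have h2 : Real.sqrt x * Real.sqrt x = x := Real.mul_self_sqrt hx0.le
    have hs : HasDerivAt Real.sqrt (1/(2*Real.sqrt x)) x := Real.hasDerivAt_sqrt (ne_of_gt hx0)
    have h1 : HasDerivAt (fun w => b * Real.sqrt w) (b * (1/(2*Real.sqrt x))) x := hs.const_mul b
    have hinv : HasDerivAt (fun w => (Real.sqrt w)⁻¹)
        (-(1/(2*Real.sqrt x)) / (Real.sqrt x)^2) x := hs.inv (ne_of_gt hsx)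
    have h3 : HasDerivAt ψ
        (b * (1/(2*Real.sqrt x)) - a * (-(1/(2*Real.sqrt x)) / (Real.sqrt x)^2)) x :=
      h1.sub (hinv.const_mul a)
    have heq : b * (1/(2*Real.sqrt x)) - a * (-(1/(2*Real.sqrt x)) / (Real.sqrt x)^2)
        = ψ' x := by
      simp only [hψ']
      rw [pow_two, h2]
      field_simp
      ring
    exact (heq ▸ h3).hasDerivWithinAt
  -- injectivity
  have hinj : Set.InjOn ψ (Set.Ioi 0) := by
    have hmono : StrictMonoOn ψ (Set.Ioi 0) := by
      intro x hx y hy hxy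
      have hx0 : (0:ℝ) < x := hx
      have hy0 : (0:ℝ) < y := hy
      have hs : Real.sqrt x < Real.sqrt y := Real.sqrt_lt_sqrt hx0.le hxy
      have hsx : (0:ℝ) < Real.sqrt x := Real.sqrt_pos.2 hx0
      have hsy : (0:ℝ) < Real.sqrt y := Real.sqrt_pos.2 hy0
      have h1 : b * Real.sqrt x < b * Real.sqrt y := mul_lt_mul_of_pos_left hs hb
      have h2 : (Real.sqrt y)⁻¹ ≤ (Real.sqrt x)⁻¹ := by gcongr
      have h3 : a * (Real.sqrt y)⁻¹ ≤ a * (Real.sqrt x)⁻¹ := by gcongr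
      simp only [hψ]
      linarith
    exact hmono.injOn
  -- surjectivity
  have himg : ψ '' Set.Ioi 0 = Set.univ := by
    apply Set.eq_univ_of_forall
    intro u
    set D := Real.sqrt (u^2 + 4*a*b) with hD'
    have hD2 : D^2 = u^2 + 4*a*b := Real.sq_sqrt (by positivity)
    have hDu : |u| < D := by
      rw [hD', ← Real.sqrt_sq_eq_abs]
      exact Real.sqrt_lt_sqrt (sq_nonneg u) (by nlinarith)
    set t := (u + D)/(2*b) with ht'
    have ht : 0 < t := by
      have h := neg_abs_le u
      have : 0 < u + D := by linarith
      positivity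
    refine ⟨t^2, mem_Ioi.2 (by positivity), ?_⟩
    have hst : Real.sqrt (t^2) = t := Real.sqrt_sq ht.le
    simp only [hψ, hst]
    have hq : b*t^2 - u*t - a = 0 := by
      rw [ht']
      field_simp
      nlinarith [hD2]
    field_simp
    linear_combination hq
  -- change of variables
  have key := integral_image_eq_integral_abs_deriv_smul measurableSet_Ioi hderiv hinj
    (fun u => Real.exp (-(u^2)))
  rw [himg, Measure.restrict_univ] at key
  have hgauss : ∫ u : ℝ, Real.exp (-(u^2)) = Real.sqrt π := by
    have := integral_gaussian 1
    simpa using this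
  rw [hgauss] at key
  -- pointwise simplification of the transformed integrand
  have hpt : ∀ x ∈ Set.Ioi (0:ℝ),
      |ψ' x| • Real.exp (-(ψ x)^2)
        = Real.exp (2*Real.sqrt (A*B)) * ((ψ' x) * Real.exp (-(A/x) - B*x)) := by
    intro x hx
    have hx0 : (0:ℝ) < x := hx
    have hsx : (0:ℝ) < Real.sqrt x := Real.sqrt_pos.2 hx0
    have h2 : Real.sqrt x * Real.sqrt x = x := Real.mul_self_sqrt hx0.le
    have hab : a * b = Real.sqrt (A*B) := (Real.sqrt_mul hA.le B).symm
    have hψpos : 0 ≤ ψ' x := by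
      simp only [hψ']
      positivity
    have hsq : -(ψ x)^2 = (-(A/x) - B*x) + 2*Real.sqrt (A*B) := by
      simp only [hψ]
      have hA2 : a * a = A := Real.mul_self_sqrt hA.le
      have hB2 : b * b = B := Real.mul_self_sqrt hB.le
      rw [← hab, ← hA2, ← hB2]
      set s := Real.sqrt x with hs_def
      rw [← h2]
      have hs0 : s ≠ 0 := ne_of_gt hsx
      field_simp
      ring
    rw [abs_of_nonneg hψpos, smul_eq_mul, hsq, Real.exp_add]
    ring
  rw [setIntegral_congr_fun measurableSet_Ioi hpt, integral_const_mul] at key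
  show (∫ w in Set.Ioi (0:ℝ), ψ' w * Real.exp (-(A/w) - B*w)) = _
  have hexp : (0:ℝ) < Real.exp (2*Real.sqrt (A*B)) := Real.exp_pos _
  calc (∫ w in Set.Ioi (0:ℝ), ψ' w * Real.exp (-(A/w) - B*w))
      = (Real.exp (2*Real.sqrt (A*B)) * ∫ w in Set.Ioi (0:ℝ), ψ' w * Real.exp (-(A/w) - B*w))
          * Real.exp (-(2*Real.sqrt (A*B))) := by
        rw [Real.exp_neg]
        rw [mul_right_comm (Real.exp _), mul_inv_cancel₀ hexp.ne', one_mul]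
    _ = Real.sqrt π * Real.exp (-(2*Real.sqrt (A*B))) := by rw [← key]

lemma integrable_core2 {A B : ℝ} (hA : 0 < A) (hB : 0 < B) :
    IntegrableOn (fun w => (w * Real.sqrt w)⁻¹ * Real.exp (-(A/w) - B*w)) (Set.Ioi (0:ℝ)) := by
  have hmaj : IntegrableOn (fun w : ℝ => A⁻¹ * (w ^ (-(1/2) : ℝ) * Real.exp (-B * w ^ (1:ℝ))))
      (Set.Ioi (0:ℝ)) :=
    (integrableOn_rpow_mul_exp_neg_mul_rpow (by norm_num) zero_lt_one hB).const_mul _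
  refine Integrable.mono' hmaj ?_ ?_
  · have h0 : ∀ x ∈ Set.Ioi (0:ℝ), (x:ℝ) ≠ 0 := fun x hx => ne_of_gt hx
    have h1 : ContinuousOn (fun w : ℝ => -(A/w) - B*w) (Set.Ioi 0) :=
      ((continuousOn_const.div continuousOn_id h0).neg).sub
        ((continuous_const.mul continuous_id).continuousOn)
    have h2 : ContinuousOn (fun w : ℝ => (w * Real.sqrt w)⁻¹) (Set.Ioi 0) :=
      ((continuousOn_id.mul Real.continuous_sqrt.continuousOn)).inv₀
        (fun x hx => by
          have hx0 : (0:ℝ) < x := hx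
          have : (0:ℝ) < x * Real.sqrt x := by positivity
          exact ne_of_gt this)
    exact (h2.mul (Real.continuous_exp.comp_continuousOn h1)).aestronglyMeasurable
      measurableSet_Ioi
  · filter_upwards [ae_restrict_mem measurableSet_Ioi] with w hw
    have hw0 : (0:ℝ) < w := hw
    rw [norm_mul, Real.norm_eq_abs, Real.norm_eq_abs, abs_of_nonneg (by positivity),
      abs_of_nonneg (Real.exp_nonneg _), Real.rpow_neg hw0.le, ← Real.sqrt_eq_rpow,
      Real.rpow_one]
    have hkey : w⁻¹ * Real.exp (-(A/w)) ≤ A⁻¹ := by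
      have h1 : A/w ≤ Real.exp (A/w) := by
        have := Real.add_one_le_exp (A/w)
        have : A/w ≤ A/w + 1 := by linarith [show (0:ℝ) < 1 by norm_num]
        linarith [Real.add_one_le_exp (A/w)]
      have h2 : Real.exp (-(A/w)) ≤ (A/w)⁻¹ := by
        rw [Real.exp_neg]
        exact inv_anti₀ (by positivity) h1
      calc w⁻¹ * Real.exp (-(A/w)) ≤ w⁻¹ * (A/w)⁻¹ := by gcongr
        _ = A⁻¹ := by field_simp [mul_comm]
    calc (w * Real.sqrt w)⁻¹ * Real.exp (-(A/w) - B*w)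
        = (w⁻¹ * Real.exp (-(A/w))) * ((Real.sqrt w)⁻¹ * Real.exp (-(B*w))) := by
          rw [mul_inv, show -(A/w) - B*w = -(A/w) + -(B*w) by ring, Real.exp_add]
          ring
      _ ≤ A⁻¹ * ((Real.sqrt w)⁻¹ * Real.exp (-(B*w))) := by
          have : (0:ℝ) ≤ (Real.sqrt w)⁻¹ * Real.exp (-(B*w)) := by positivity
          exact mul_le_mul_of_nonneg_right hkey this
      _ = A⁻¹ * ((Real.sqrt w)⁻¹ * Real.exp (-B*w)) := by ring_nf

lemma glasser_s1 {A B : ℝ} (hA : 0 ≤ A) (hB : 0 < B) :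
    ∫ w in Set.Ioi (0:ℝ), (Real.sqrt w)⁻¹ * Real.exp (-(A/w) - B*w)
      = Real.sqrt (π/B) * Real.exp (-(2*Real.sqrt (A*B))) := by
  rcases eq_or_lt_of_le hA with h0 | hA'
  · have hcong : ∀ w ∈ Set.Ioi (0:ℝ), (Real.sqrt w)⁻¹ * Real.exp (-(A/w) - B*w)
        = (Real.sqrt w)⁻¹ * Real.exp (-(B*w)) := by
      intro w hw
      rw [← h0]
      norm_num
    rw [setIntegral_congr_fun measurableSet_Ioi hcong, gamma_half_integral hB, ← h0]
    norm_num
  · set I := ∫ w in Set.Ioi (0:ℝ), (Real.sqrt w)⁻¹ * Real.exp (-(A/w) - B*w) with hI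
    set J := ∫ w in Set.Ioi (0:ℝ), (w * Real.sqrt w)⁻¹ * Real.exp (-(A/w) - B*w) with hJ
    have hre : Real.sqrt (A/B) * J = I := by
      rw [hJ, ← integral_const_mul]
      exact reflect hA' hB
    have hgl := glasser_pos hA' hB
    have hfe : (fun w => (Real.sqrt B * (2*Real.sqrt w)⁻¹ + Real.sqrt A * (2*(w*Real.sqrt w))⁻¹)
          * Real.exp (-(A/w) - B*w))
        = fun w => (Real.sqrt B/2) * ((Real.sqrt w)⁻¹ * Real.exp (-(A/w) - B*w))
            + (Real.sqrt A/2) * ((w * Real.sqrt w)⁻¹ * Real.exp (-(A/w) - B*w)) := by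
      funext w
      rw [mul_inv, mul_inv]
      ring
    rw [hfe, integral_add ((integrable_core hA hB).const_mul _)
        ((integrable_core2 hA' hB).const_mul _), integral_const_mul, integral_const_mul,
        ← hI, ← hJ] at hgl
    -- hgl : √B/2 * I + √A/2 * J = √π * exp(-(2√(AB)))
    have hsA : (0:ℝ) < Real.sqrt A := Real.sqrt_pos.2 hA'
    have hsB : (0:ℝ) < Real.sqrt B := Real.sqrt_pos.2 hB
    have hdiv : Real.sqrt (A/B) = Real.sqrt A / Real.sqrt B := Real.sqrt_div hA B
    have hdiv2 : Real.sqrt (π/B) = Real.sqrt π / Real.sqrt B := Real.sqrt_div pi_pos.le B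
    rw [hdiv] at hre
    rw [hdiv2]
    field_simp at hre hgl ⊢
    linear_combination (hgl - hre) / 2

/-- Marginalizing the exponential mixing variable in the location-scale mixture
representation of the ALD: the integral over `w ∈ (0,∞)` of the normal density with mean
`η + ξw` and variance `wσ²/δ²` at `y`, weighted by the exponential density with rate `δ²`,
equals the asymmetric Laplace density at `y`. -/
theorem ald_mixture_integral
    (τ δ η ξ σ : ℝ) (hτ : τ ∈ Set.Ioo (0 : ℝ) 1) (hδ : 0 < δ)
    (hξ : ξ = (1 - 2 * τ) / (τ * (1 - τ))) (hσ : σ = Real.sqrt (2 / (τ * (1 - τ))))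
    (y : ℝ) :
    ∫ w in Set.Ioi (0 : ℝ),
        (δ / (σ * Real.sqrt (2 * Real.pi * w)))
          * Real.exp (-(δ ^ 2 * (y - η - ξ * w) ^ 2) / (2 * σ ^ 2 * w))
          * (δ ^ 2 * Real.exp (-(δ ^ 2) * w))
      = τ * (1 - τ) * δ ^ 2 * Real.exp (-(δ ^ 2) * checkFun τ (y - η)) := by
  obtain ⟨hτ0, hτ1⟩ := hτ
  have hc : (0:ℝ) < τ * (1 - τ) := by nlinarith
  have hσpos : (0:ℝ) < σ := by rw [hσ]; positivity
  have hσ2 : σ^2 = 2 / (τ * (1 - τ)) := by rw [hσ]; exact Real.sq_sqrt (by positivity)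
  set a : ℝ := y - η with ha'
  set A : ℝ := δ^2 * a^2 * (τ * (1 - τ)) / 4 with hA'
  set B : ℝ := δ^2 / (4 * (τ * (1 - τ))) with hB'
  set K : ℝ := δ^2 * a * (1 - 2*τ) / 2 with hK'
  have hA : (0:ℝ) ≤ A := by rw [hA']; positivity
  have hB : (0:ℝ) < B := by rw [hB']; positivity
  set C : ℝ := δ^3 / (σ * Real.sqrt (2*π)) * Real.exp K with hC'
  -- pointwise rewrite of the integrand
  have hptw : ∀ w ∈ Set.Ioi (0:ℝ),
      (δ / (σ * Real.sqrt (2 * Real.pi * w)))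
          * Real.exp (-(δ ^ 2 * (y - η - ξ * w) ^ 2) / (2 * σ ^ 2 * w))
          * (δ ^ 2 * Real.exp (-(δ ^ 2) * w))
        = C * ((Real.sqrt w)⁻¹ * Real.exp (-(A/w) - B*w)) := by
    intro w hw
    have hw0 : (0:ℝ) < w := hw
    have hsw : (0:ℝ) < Real.sqrt w := Real.sqrt_pos.2 hw0
    have hs2π : (0:ℝ) < Real.sqrt (2*π) := Real.sqrt_pos.2 (by positivity)
    have hsplit : Real.sqrt (2 * π * w) = Real.sqrt (2*π) * Real.sqrt w := by
      rw [Real.sqrt_mul (by positivity)]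
    have hexpeq : K + (-(A/w) - B*w)
        = -(δ ^ 2 * (y - η - ξ * w) ^ 2) / (2 * σ ^ 2 * w) + (-(δ ^ 2) * w) := by
      rw [hK', hA', hB', hξ, hσ2, ← ha']
      have h1 : τ ≠ 0 := ne_of_gt hτ0
      have h2 : (1:ℝ) - τ ≠ 0 := by linarith
      field_simp
      ring
    calc (δ / (σ * Real.sqrt (2 * Real.pi * w)))
          * Real.exp (-(δ ^ 2 * (y - η - ξ * w) ^ 2) / (2 * σ ^ 2 * w))
          * (δ ^ 2 * Real.exp (-(δ ^ 2) * w))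
        = δ^3 / (σ * Real.sqrt (2*π)) * ((Real.sqrt w)⁻¹
            * (Real.exp (-(δ ^ 2 * (y - η - ξ * w) ^ 2) / (2 * σ ^ 2 * w))
              * Real.exp (-(δ ^ 2) * w))) := by
          rw [hsplit]
          field_simp
      _ = δ^3 / (σ * Real.sqrt (2*π)) * ((Real.sqrt w)⁻¹
            * (Real.exp K * Real.exp (-(A/w) - B*w))) := by
          rw [← Real.exp_add, ← Real.exp_add, hexpeq]
      _ = C * ((Real.sqrt w)⁻¹ * Real.exp (-(A/w) - B*w)) := by
          rw [hC']; ring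
  rw [setIntegral_congr_fun measurableSet_Ioi hptw, integral_const_mul, glasser_s1 hA hB]
  -- now pure algebra
  have hsqAB : Real.sqrt (A*B) = δ^2 * |a| / 4 := by
    have h1 : A*B = (δ^2 * |a| / 4)^2 := by
      rw [hA', hB']
      rw [show (δ^2 * |a| / 4)^2 = δ^4 * (|a|^2) / 16 by ring, sq_abs]
      field_simp
      ring
    rw [h1, Real.sqrt_sq (by positivity)]
  have hsqπB : Real.sqrt (π/B) = 2 * Real.sqrt (π * (τ * (1-τ))) / δ := by
    have h1 : π/B = (2 * Real.sqrt (π * (τ * (1-τ))) / δ)^2 := by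
      rw [hB', show (2 * Real.sqrt (π * (τ * (1-τ))) / δ)^2
          = 4 * (Real.sqrt (π * (τ * (1-τ))))^2 / δ^2 by ring,
        Real.sq_sqrt (by positivity)]
      field_simp
    rw [h1, Real.sqrt_sq (by positivity)]
  rw [hsqAB, hsqπB]
  -- scalar: δ^3/(σ√(2π)) * (2√(πc)/δ) = δ^2 * c
  set s2 : ℝ := Real.sqrt (π * (τ * (1-τ))) with hs2'
  have hs2pos : (0:ℝ) < s2 := Real.sqrt_pos.2 (by positivity)
  have hsq2 : s2 * s2 = π * (τ * (1-τ)) := Real.mul_self_sqrt (by positivity)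
  have hkey : s2 * (σ * Real.sqrt (2*π)) = 2*π := by
    rw [hs2', hσ, ← Real.sqrt_mul (by positivity : (0:ℝ) ≤ 2 / (τ * (1 - τ))),
      ← Real.sqrt_mul (by positivity : (0:ℝ) ≤ π * (τ * (1-τ)))]
    rw [show π * (τ * (1-τ)) * (2 / (τ * (1 - τ)) * (2*π)) = (2*π)^2 by
      field_simp]
    exact Real.sqrt_sq (by positivity)
  have hσne : σ * Real.sqrt (2*π) ≠ 0 := by positivity
  have hs1 : σ * Real.sqrt (2*π) = 2*π / s2 := by
    rw [eq_div_iff (ne_of_gt hs2pos)]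
    linarith [hkey]
  have hcheck : K + -(2 * (δ^2 * |a| / 4)) = -(δ^2) * checkFun τ a := by
    rw [hK']
    unfold checkFun
    split_ifs with h
    · rw [abs_of_nonneg h]; ring
    · rw [abs_of_neg (not_le.1 h)]; ring
  calc C * (2 * s2 / δ * Real.exp (-(2 * (δ^2 * |a| / 4))))
      = δ^3 / (σ * Real.sqrt (2*π)) * (2 * s2 / δ)
          * (Real.exp K * Real.exp (-(2 * (δ^2 * |a| / 4)))) := by
        rw [hC']; ring
    _ = δ^3 / (σ * Real.sqrt (2*π)) * (2 * s2 / δ)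
          * Real.exp (-(δ^2) * checkFun τ a) := by
        rw [← Real.exp_add, hcheck]
    _ = τ * (1 - τ) * δ ^ 2 * Real.exp (-(δ ^ 2) * checkFun τ a) := by
        rw [hs1]
        have hδne : δ ≠ 0 := ne_of_gt hδ
        have hπne : π ≠ 0 := ne_of_gt pi_pos
        set E := Real.exp (-(δ^2) * checkFun τ a) with hE
        field_simp
        linear_combination E * hsq2
end
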